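/- Let T be a tree on n ≥ 2 vertices. None of the partial derivatives D_r p of the Steiner 3-form p = p_T^{(3)} is divisible by s = Σ_j x_j in ℂ[x_1,...,x_n]. -/

import Mathlib

open MvPolynomial Finset

/-- The Steiner distance of a set `S` of vertices of `G`: the minimum number of
edges of a connected subgraph of `G` containing `S`. -/
noncomputable def steinerDist {V : Type*} (G : SimpleGraph V) (S : Set V) : ℕ :=
  sInf {m | ∃ H : G.Subgraph, H.Connected ∧ S ⊆ H.verts ∧ H.edgeSet.ncard = m}

/-- The Steiner 3-form of a graph on `Fin n`. -/
noncomputable def steinerForm3 {n : ℕ} (G : SimpleGraph (Fin n)) : MvPolynomial (Fin n) ℂ :=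
  ∑ i, ∑ j, ∑ k, MvPolynomial.C (steinerDist G {i, j, k} : ℂ) *
    MvPolynomial.X i * MvPolynomial.X j * MvPolynomial.X k

/-- The Steiner k-form of a graph on `Fin n`. -/
noncomputable def steinerFormK {n : ℕ} (G : SimpleGraph (Fin n)) (k : ℕ) :
    MvPolynomial (Fin n) ℂ :=
  ∑ f : Fin k → Fin n, MvPolynomial.C (steinerDist G (Set.range f) : ℂ) *
    ∏ j, MvPolynomial.X (f j)

noncomputable def sPoly (n : ℕ) : MvPolynomial (Fin n) ℂ := ∑ r, MvPolynomial.X r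

noncomputable def gPoly {n : ℕ} (G : SimpleGraph (Fin n)) : MvPolynomial (Fin n) ℂ :=
  3 * ∑ i, ∑ j, if i < j then
    MvPolynomial.C (G.dist i j : ℂ) * MvPolynomial.X i * MvPolynomial.X j else 0

private lemma steinerDist_singleton' {V : Type*} (G : SimpleGraph V) (v : V) :
    steinerDist G {v} = 0 := by
  have h0 : 0 ∈ {m | ∃ H : G.Subgraph, H.Connected ∧ ({v} : Set V) ⊆ H.verts ∧
      H.edgeSet.ncard = m} :=
    ⟨G.singletonSubgraph v, SimpleGraph.Subgraph.singletonSubgraph_connected,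
      by simp [SimpleGraph.singletonSubgraph_verts],
      by simp [SimpleGraph.edgeSet_singletonSubgraph]⟩
  exact Nat.eq_zero_of_le_zero (Nat.sInf_le h0)

private lemma steinerDist_pair_ne_zero' {n : ℕ} (G : SimpleGraph (Fin n)) (hc : G.Connected)
    {a b : Fin n} (hab : a ≠ b) : steinerDist G {a, b} ≠ 0 := by
  intro h0
  rw [steinerDist, Nat.sInf_eq_zero] at h0
  rcases h0 with h0 | h0
  · obtain ⟨H, hH, hsub, hcard⟩ := h0
    have hempty : H.edgeSet = ∅ := (Set.ncard_eq_zero (Set.toFinite _)).mp hcard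
    have ha : a ∈ H.verts := hsub (by simp)
    have hbv : b ∈ H.verts := hsub (by simp)
    have hbot : H.coe = ⊥ := by
      ext u w
      simp only [SimpleGraph.Subgraph.coe_adj, SimpleGraph.bot_adj, iff_false]
      intro hadj
      have : s(u.val, w.val) ∈ H.edgeSet := hadj
      simp [hempty] at this
    have hre := hH.coe.preconnected ⟨a, ha⟩ ⟨b, hbv⟩
    rw [hbot] at hre
    exact hab (congrArg Subtype.val (SimpleGraph.reachable_bot.mp hre))
  · have htop : (⊤ : G.Subgraph).Connected := by
      rw [SimpleGraph.Subgraph.connected_iff']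
      exact (SimpleGraph.Subgraph.topIso (G := G)).connected_iff.mpr hc
    have hmem : (⊤ : G.Subgraph).edgeSet.ncard ∈
        {m | ∃ H : G.Subgraph, H.Connected ∧ ({a, b} : Set (Fin n)) ⊆ H.verts ∧
          H.edgeSet.ncard = m} :=
      ⟨⊤, htop, by simp [SimpleGraph.Subgraph.verts_top], rfl⟩
    rw [h0] at hmem
    exact hmem

private lemma eval_pderiv_term' {N : ℕ} (v : Fin N → ℂ) (r i j k : Fin N) (c : ℂ) :
    eval v (pderiv r (C c * X i * X j * X k)) =
      c * ((if i = r then 1 else 0) * v j * v k + v i * (if j = r then 1 else 0) * v k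
        + v i * v j * (if k = r then 1 else 0)) := by
  simp only [pderiv_mul, pderiv_X, pderiv_C, Pi.single_apply, map_add, map_mul, eval_C, eval_X,
    zero_mul, smul_eq_mul, mul_zero, zero_add, apply_ite (eval v), map_one, map_zero]
  ring

theorem stmt13 {n : ℕ} (G : SimpleGraph (Fin (n + 2))) (hT : G.IsTree) (r : Fin (n + 2)) :
    ¬ sPoly (n + 2) ∣ MvPolynomial.pderiv r (steinerForm3 G) := by
  intro hdvd
  have hc : G.Connected := hT.isConnected
  -- choose b ≠ r
  obtain ⟨b, hb⟩ : ∃ b : Fin (n + 2), b ≠ r := by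
    rcases Decidable.em (r = 0) with h | h
    · exact ⟨1, by simp [h, Fin.ext_iff]⟩
    · exact ⟨0, fun hh => h hh.symm⟩
  set v : Fin (n + 2) → ℂ :=
    fun i => (if i = r then 1 else 0) - (if i = b then 1 else 0) with hv
  have hvr : v r = 1 := by simp [hv, hb.symm]
  have hvb : v b = -1 := by simp [hv, hb]
  have hv0 : ∀ i, i ≠ r → i ≠ b → v i = 0 := by intro i h1 h2; simp [hv, h1, h2]
  -- eval at v kills multiples of sPoly
  have hs : eval v (sPoly (n + 2)) = 0 := by
    simp [sPoly, hv, Finset.sum_sub_distrib, Finset.sum_ite_eq']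
  obtain ⟨q, hq⟩ := hdvd
  have hev : eval v (pderiv r (steinerForm3 G)) = 0 := by
    rw [hq, map_mul, hs, zero_mul]
  -- term function
  set F : Fin (n + 2) → Fin (n + 2) → Fin (n + 2) → ℂ := fun i j k =>
    (steinerDist G {i, j, k} : ℂ) *
      ((if i = r then 1 else 0) * v j * v k + v i * (if j = r then 1 else 0) * v k
        + v i * v j * (if k = r then 1 else 0)) with hF
  have hFval : eval v (pderiv r (steinerForm3 G)) = ∑ i, ∑ j, ∑ k, F i j k := by
    rw [steinerForm3]
    rw [map_sum, map_sum]
    refine Finset.sum_congr rfl fun i _ => ?_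
    rw [map_sum, map_sum]
    refine Finset.sum_congr rfl fun j _ => ?_
    rw [map_sum, map_sum]
    refine Finset.sum_congr rfl fun k _ => ?_
    exact eval_pderiv_term' v r i j k _
  have hF0 : ∀ i j k : Fin (n + 2),
      (i ≠ r ∧ i ≠ b) ∨ (j ≠ r ∧ j ≠ b) ∨ (k ≠ r ∧ k ≠ b) → F i j k = 0 := by
    intro i j k h
    rcases h with ⟨h1, h2⟩ | ⟨h1, h2⟩ | ⟨h1, h2⟩ <;>
      simp [hF, hv0 _ h1 h2, h1]
  have collapse : ∀ f : Fin (n + 2) → ℂ, (∀ i, i ≠ r → i ≠ b → f i = 0) →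
      ∑ i, f i = f r + f b := by
    intro f hf
    rw [← Finset.sum_subset (Finset.subset_univ {r, b})
      (fun x _ hx => by
        simp only [Finset.mem_insert, Finset.mem_singleton, not_or] at hx
        exact hf x hx.1 hx.2)]
    exact Finset.sum_pair hb.symm
  have hsum : ∑ i, ∑ j, ∑ k, F i j k =
      F r r r + F r r b + F r b r + F r b b + F b r r + F b r b + F b b r + F b b b := by
    rw [collapse _ (fun i h1 h2 => by
      refine Finset.sum_eq_zero fun j _ => Finset.sum_eq_zero fun k _ => ?_
      exact hF0 i j k (Or.inl ⟨h1, h2⟩))]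
    rw [collapse (fun j => ∑ k, F r j k) (fun j h1 h2 =>
      Finset.sum_eq_zero fun k _ => hF0 r j k (Or.inr (Or.inl ⟨h1, h2⟩)))]
    rw [collapse (fun j => ∑ k, F b j k) (fun j h1 h2 =>
      Finset.sum_eq_zero fun k _ => hF0 b j k (Or.inr (Or.inl ⟨h1, h2⟩)))]
    rw [collapse (fun k => F r r k) (fun k h1 h2 => hF0 r r k (Or.inr (Or.inr ⟨h1, h2⟩)))]
    rw [collapse (fun k => F r b k) (fun k h1 h2 => hF0 r b k (Or.inr (Or.inr ⟨h1, h2⟩)))]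
    rw [collapse (fun k => F b r k) (fun k h1 h2 => hF0 b r k (Or.inr (Or.inr ⟨h1, h2⟩)))]
    rw [collapse (fun k => F b b k) (fun k h1 h2 => hF0 b b k (Or.inr (Or.inr ⟨h1, h2⟩)))]
    ring
  -- set identities
  have e1 : ({r, r, r} : Set (Fin (n + 2))) = {r} := by ext x; simp
  have e2 : ({r, r, b} : Set (Fin (n + 2))) = {r, b} := by ext x; simp
  have e3 : ({r, b, r} : Set (Fin (n + 2))) = {r, b} := by ext x; simp; tauto
  have e4 : ({r, b, b} : Set (Fin (n + 2))) = {r, b} := by ext x; simp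
  have e5 : ({b, r, r} : Set (Fin (n + 2))) = {r, b} := by ext x; simp; tauto
  have e6 : ({b, r, b} : Set (Fin (n + 2))) = {r, b} := by ext x; simp
  have e7 : ({b, b, r} : Set (Fin (n + 2))) = {r, b} := by ext x; simp; tauto
  have e8 : ({b, b, b} : Set (Fin (n + 2))) = {b} := by ext x; simp
  set d : ℂ := (steinerDist G {r, b} : ℂ) with hd
  have hdne : d ≠ 0 := by
    rw [hd]
    exact_mod_cast steinerDist_pair_ne_zero' G hc hb.symm
  have hfinal : eval v (pderiv r (steinerForm3 G)) = -3 * d := by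
    rw [hFval, hsum]
    simp only [hF, e1, e2, e3, e4, e5, e6, e7, e8, steinerDist_singleton', hvr, hvb,
      if_pos rfl, if_neg hb, if_true, eq_self_iff_true, Nat.cast_zero, ← hd]
    ring
  rw [hfinal] at hev
  have : d = 0 := by linear_combination (-1/3 : ℂ) * hev
  exact hdne this
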